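/- The derivative of s ↦ Γ(s)·L(s,χ) at s = 1 equals (1/2)·∫₀^∞ (log t)/cosh t dt, where χ is the nontrivial Dirichlet character mod 4. -/

import Mathlib

open Complex MeasureTheory Set Filter Asymptotics Topology Real

/-- The nontrivial Dirichlet character mod 4, with values in ℂ. -/
noncomputable def chi4 : DirichletCharacter ℂ 4 :=
  ZMod.χ₄.ringHomComp (Int.castRingHom ℂ)

noncomputable def Fc : ℝ → ℂ := fun t => 1 / (2 * Real.cosh t)

lemma chi4_apply (n : ℕ) : chi4 (n : ZMod 4) = ((ZMod.χ₄ (n : ZMod 4) : ℤ) : ℂ) := by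
  simp [chi4, MulChar.ringHomComp_apply]

lemma chi4_even {n : ℕ} (hn : n % 2 = 0) : chi4 (n : ZMod 4) = 0 := by
  have h := ZMod.χ₄_nat_eq_if_mod_four n
  rw [chi4_apply, h]
  simp [hn]

lemma chi4_odd (k : ℕ) : chi4 ((2 * k + 1 : ℕ) : ZMod 4) = (-1 : ℂ) ^ k := by
  rw [chi4_apply, ZMod.χ₄_eq_neg_one_pow (by omega)]
  have : (2 * k + 1) / 2 = k := by omega
  rw [this]
  push_cast
  ring

lemma hasSum_Fc {t : ℝ} (ht : t ∈ Ioi (0:ℝ)) :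
    HasSum (fun n : ℕ => chi4 (n : ZMod 4) * (Real.exp (-(n:ℝ) * t) : ℂ)) (Fc t) := by
  have ht' : (0:ℝ) < t := ht
  set g : ℕ → ℂ := fun n => chi4 (n : ZMod 4) * (Real.exp (-(n:ℝ) * t) : ℂ) with hg
  have hinj : Function.Injective (fun k : ℕ => 2 * k + 1) := by
    intro a b h
    dsimp at h
    omega
  have hzero : ∀ n ∉ Set.range (fun k : ℕ => 2 * k + 1), g n = 0 := by
    intro n hn
    have h2 : n % 2 = 0 := by
      by_contra h
      exact hn ⟨n / 2, by dsimp; omega⟩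
    simp only [hg, chi4_even h2, zero_mul]
  set x : ℂ := -(Real.exp (-(2*t)) : ℂ) with hxdef
  have hx : ‖x‖ < 1 := by
    simp only [hxdef, norm_neg, Complex.norm_real, Real.norm_eq_abs, Real.abs_exp]
    exact Real.exp_lt_one_iff.mpr (by linarith)
  have hgeo := (hasSum_geometric_of_norm_lt_one hx).mul_right ((Real.exp (-t) : ℝ) : ℂ)
  have hcomp : (fun k : ℕ => x ^ k * ((Real.exp (-t) : ℝ) : ℂ)) = g ∘ (fun k : ℕ => 2 * k + 1) := by
    funext k
    simp only [Function.comp_apply, hg, chi4_odd, hxdef]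
    rw [neg_pow]
    push_cast
    rw [← Complex.exp_nat_mul, mul_assoc, ← Complex.exp_add]
    congr 2
    ring
  rw [hcomp] at hgeo
  have hval : (1 - x)⁻¹ * ((Real.exp (-t) : ℝ) : ℂ) = Fc t := by
    have hr : (1 + Real.exp (-(2*t)))⁻¹ * Real.exp (-t) = 1 / (2 * Real.cosh t) := by
      rw [Real.cosh_eq]
      have h1 : Real.exp (-t) * (Real.exp t + Real.exp (-t)) = 1 + Real.exp (-(2*t)) := by
        rw [mul_add, ← Real.exp_add, ← Real.exp_add, neg_add_cancel, Real.exp_zero,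
          show -t + -t = -(2*t) by ring]
      field_simp
      nlinarith [Real.exp_pos (-t), Real.exp_pos t, Real.exp_pos (-(2*t))]
    simp only [hxdef, sub_neg_eq_add, Fc]
    rw [show ((1:ℂ) + (Real.exp (-(2*t)) : ℝ)) = ((1 + Real.exp (-(2*t)) : ℝ) : ℂ) by push_cast; ring]
    rw [← Complex.ofReal_inv, ← Complex.ofReal_mul, hr]
    push_cast [Real.cosh_eq]
    ring
  rw [hval] at hgeo
  exact (hinj.hasSum_iff hzero).mp hgeo

lemma norm_chi4_le (n : ℕ) : ‖chi4 (n : ZMod 4)‖ ≤ 1 := by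
  rw [chi4_apply, ZMod.χ₄_nat_eq_if_mod_four]
  split_ifs <;> simp

lemma key_identity {s : ℂ} (hs : 1 < s.re) :
    Complex.Gamma s * DirichletCharacter.LFunction chi4 s = mellin Fc s := by
  have hs0 : 0 < s.re := lt_trans one_pos hs
  have hsum : Summable (fun n : ℕ => ‖chi4 (n : ZMod 4)‖ / (n:ℝ) ^ s.re) := by
    refine Summable.of_nonneg_of_le (fun n => by positivity) (fun n => ?_)
      ((Real.summable_one_div_nat_rpow).mpr hs)
    rcases Nat.eq_zero_or_pos n with h | h
    · subst h
      simp [Real.zero_rpow hs0.ne']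
    · have hn : (0:ℝ) < (n:ℝ) := by exact_mod_cast h
      gcongr
      exact norm_chi4_le n
  have hp : ∀ n : ℕ, chi4 (n : ZMod 4) = 0 ∨ 0 < ((n:ℝ)) := by
    intro n
    rcases Nat.eq_zero_or_pos n with h | h
    · left; subst h; exact chi4_even rfl
    · right; exact_mod_cast h
  have hmel := hasSum_mellin (F := Fc) (s := s) hp hs0 (fun t ht => hasSum_Fc ht) hsum
  have hLsummable : LSeriesSummable (fun n : ℕ => chi4 (n : ZMod 4)) s :=
    ZMod.LSeriesSummable_of_one_lt_re (fun i : ZMod 4 => chi4 i) hs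
  have hL := hLsummable.hasSum.mul_left (Complex.Gamma s)
  rw [DirichletCharacter.LFunction_eq_LSeries chi4 hs]
  refine HasSum.unique ?_ hmel
  convert hL using 2 with n
  case e'_3 => rfl
  case e'_6 => rfl
  have h0 : chi4 (0 : ZMod 4) = 0 := by
    simpa using chi4_even (n := 0) rfl
  rcases Nat.eq_zero_or_pos n with h | h
  · subst h
    simp [LSeries.term, h0]
  · rw [LSeries.term_of_ne_zero h.ne']
    push_cast
    ring

lemma Fc_norm (t : ℝ) : ‖Fc t‖ = 1 / (2 * Real.cosh t) := by
  have h : Fc t = ((1 / (2 * Real.cosh t) : ℝ) : ℂ) := by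
    simp [Fc]
  rw [h, Complex.norm_real, Real.norm_eq_abs, abs_of_pos (by have := Real.cosh_pos t; positivity)]

lemma Fc_top : Fc =O[atTop] fun t : ℝ => t ^ (-2 : ℝ) := by
  have h1 : Fc =O[atTop] (fun t => Real.exp (-1 * t)) := by
    refine IsBigO.of_bound 1 ?_
    filter_upwards with t
    rw [Fc_norm, one_mul, Real.norm_eq_abs, Real.abs_exp, neg_one_mul, Real.cosh_eq,
      div_le_iff₀ (by positivity)]
    have hmul : Real.exp (-t) * Real.exp t = 1 := by
      rw [← Real.exp_add]; simp
    nlinarith [sq_nonneg (Real.exp (-t)), Real.exp_pos (-t)]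
  exact h1.trans (isLittleO_exp_neg_mul_rpow_atTop one_pos (-2 : ℝ)).isBigO

lemma Fc_zero : Fc =O[𝓝[>] (0:ℝ)] fun t : ℝ => t ^ (-(0:ℝ)) := by
  refine IsBigO.of_bound 1 ?_
  filter_upwards with t
  rw [Fc_norm, neg_zero, Real.rpow_zero, norm_one, mul_one]
  rw [div_le_iff₀ (by have := Real.cosh_pos t; positivity)]
  nlinarith [Real.one_le_cosh t]

lemma mellin_Fc_hasDerivAt {s : ℂ} (hs0 : 0 < s.re) (hs2 : s.re < 2) :
    HasDerivAt (mellin Fc) (mellin (fun t => Real.log t • Fc t) s) s := by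
  have hcont : Continuous Fc := by
    apply continuous_const.div (by continuity)
    intro t
    have := Real.cosh_pos t
    intro h
    rw [show ((2 : ℂ) * (Real.cosh t : ℂ)) = ((2 * Real.cosh t : ℝ) : ℂ) by push_cast; ring] at h
    exact absurd (Complex.ofReal_eq_zero.mp h) (by positivity)
  exact (mellin_hasDerivAt_of_isBigO_rpow
    (hcont.locallyIntegrable.locallyIntegrableOn _) Fc_top hs2 Fc_zero hs0).2

lemma chi4_ne_one : chi4 ≠ 1 := by
  intro h
  have hu : IsUnit ((3:ℕ) : ZMod 4) := IsUnit.of_mul_eq_one ((3:ℕ) : ZMod 4) (by decide)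
  have h3 : chi4 ((3:ℕ) : ZMod 4) = 1 := by
    rw [h, ← hu.unit_spec, MulChar.one_apply_coe]
  have h3' : chi4 ((3:ℕ) : ZMod 4) = -1 := by
    rw [chi4_apply, ZMod.χ₄_nat_three_mod_four (by norm_num)]
    norm_num
  rw [h3'] at h3
  norm_num at h3

theorem hasDerivAt_gamma_mul_L :
    HasDerivAt (fun s : ℂ => Complex.Gamma s * DirichletCharacter.LFunction chi4 s)
      (((∫ t in Set.Ioi (0 : ℝ), Real.log t / Real.cosh t : ℝ) : ℂ) / 2) 1 := by
  set U : Set ℂ := {s : ℂ | 0 < s.re ∧ s.re < 2} with hU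
  have hUo : IsOpen U := by
    have : U = Complex.re ⁻¹' Ioo 0 2 := rfl
    rw [this]
    exact isOpen_Ioo.preimage Complex.continuous_re
  have h1U : (1:ℂ) ∈ U := by simp [hU]
  have hGL : AnalyticOnNhd ℂ
      (fun s => Complex.Gamma s * DirichletCharacter.LFunction chi4 s) U := by
    refine DifferentiableOn.analyticOnNhd (fun s hs => ?_) hUo
    refine ((Complex.differentiableAt_Gamma s fun m h => ?_).mul
      ((DirichletCharacter.differentiable_LFunction chi4_ne_one) s)).differentiableWithinAt
    have h0 : (0:ℝ) < s.re := hs.1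
    rw [h] at h0
    simp only [Complex.neg_re, Complex.natCast_re] at h0
    have : (0:ℝ) ≤ (m:ℝ) := Nat.cast_nonneg m
    linarith
  have hM : AnalyticOnNhd ℂ (mellin Fc) U := by
    refine DifferentiableOn.analyticOnNhd (fun s hs => ?_) hUo
    exact (mellin_Fc_hasDerivAt hs.1 hs.2).differentiableAt.differentiableWithinAt
  have hpre : IsPreconnected U := by
    have hconv : Convex ℝ U := (convex_halfSpace_re_gt 0).inter (convex_halfSpace_re_lt 2)
    exact hconv.isPreconnected
  have h32U : ((3/2 : ℝ) : ℂ) ∈ U := by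
    simp [hU, Complex.ofReal_re]
    norm_num
  have hev : (fun s => Complex.Gamma s * DirichletCharacter.LFunction chi4 s)
      =ᶠ[𝓝 ((3/2 : ℝ) : ℂ)] mellin Fc := by
    have hop : IsOpen {s : ℂ | 1 < s.re} := isOpen_lt continuous_const Complex.continuous_re
    have hmem : {s : ℂ | 1 < s.re} ∈ 𝓝 ((3/2 : ℝ) : ℂ) :=
      hop.mem_nhds (by simp [Complex.ofReal_re]; norm_num)
    filter_upwards [hmem] with s hs using key_identity hs
  have heq := hGL.eqOn_of_preconnected_of_eventuallyEq hM hpre h32U hev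
  have hD := mellin_Fc_hasDerivAt (s := 1) (by norm_num) (by norm_num)
  have hev1 : (fun s => Complex.Gamma s * DirichletCharacter.LFunction chi4 s)
      =ᶠ[𝓝 (1:ℂ)] mellin Fc := by
    filter_upwards [hUo.mem_nhds h1U] with s hs using heq hs
  have hfinal := hD.congr_of_eventuallyEq hev1
  convert hfinal using 1
  case e'_4 => rfl
  case e'_5 => rfl
  simp only [mellin, sub_self, Complex.cpow_zero, one_smul]
  have hint : ∀ t : ℝ, Real.log t • Fc t = (((Real.log t / Real.cosh t) / 2 : ℝ) : ℂ) := by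
    intro t
    have hc := (Real.cosh_pos t).ne'
    rw [Fc, Complex.real_smul]
    push_cast
    field_simp
  simp_rw [hint]
  have hcast : (∫ t in Ioi (0:ℝ), (((Real.log t / Real.cosh t) / 2 : ℝ) : ℂ))
      = (((∫ t in Ioi (0:ℝ), (Real.log t / Real.cosh t) / 2 : ℝ)) : ℂ) := integral_ofReal
  rw [hcast, integral_div]
  push_cast
  ring
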